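/- Let X = X_1 × ... × X_d be a product of finite sets (each |X_i| ≥ 2), and let B, C be proper boxes in X. Then B and C are dichotomous (i.e., there exists i with B_i = X_i \ C_i) if and only if their hats (the sets of tuples (A_1,...,A_d) of odd subsets meeting each factor oddly) are disjoint. -/

import Mathlib

lemma aux_odd {α : Type*} [Fintype α] [DecidableEq α] (B C : Finset α)
    (hB : B.Nonempty) (hC : C.Nonempty) (h : B ≠ Cᶜ) :
    ∃ A : Finset α, Odd A.card ∧ Odd (A ∩ B).card ∧ Odd (A ∩ C).card := by
  by_cases hBC : (B ∩ C).Nonempty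
  · obtain ⟨x, hx⟩ := hBC
    simp only [Finset.mem_inter] at hx
    refine ⟨{x}, ?_, ?_, ?_⟩ <;>
      simp [Finset.singleton_inter_of_mem, hx.1, hx.2]
  · -- B and C disjoint, B ⊆ Cᶜ, B ≠ Cᶜ, so ∃ z ∉ B ∪ C
    rw [Finset.not_nonempty_iff_eq_empty] at hBC
    have hsub : B ⊆ Cᶜ := by
      intro x hx
      simp only [Finset.mem_compl]
      intro hxC
      have : x ∈ B ∩ C := Finset.mem_inter.2 ⟨hx, hxC⟩
      simp [hBC] at this
    obtain ⟨z, hzC, hzB⟩ := Finset.exists_of_ssubset (hsub.ssubset_of_ne h)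
    obtain ⟨b, hb⟩ := hB
    obtain ⟨c, hc⟩ := hC
    have hzC' : z ∉ C := Finset.mem_compl.1 hzC
    have hbc : b ≠ c := by rintro rfl; exact absurd (Finset.mem_inter.2 ⟨hb, hc⟩) (by simp [hBC])
    have hbC : b ∉ C := fun hx => absurd (Finset.mem_inter.2 ⟨hb, hx⟩) (by simp [hBC])
    have hcB : c ∉ B := fun hx => absurd (Finset.mem_inter.2 ⟨hx, hc⟩) (by simp [hBC])
    have hzb : z ≠ b := fun e => hzB (e ▸ hb)
    have hzc : z ≠ c := fun e => hzC' (e ▸ hc)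
    refine ⟨{z, b, c}, ?_, ?_, ?_⟩
    · rw [Finset.card_insert_of_notMem (by simp [hzb, hzc]),
        Finset.card_insert_of_notMem (by simp [hbc])]
      simp [Finset.card_singleton]
      decide
    · have : ({z, b, c} : Finset α) ∩ B = {b} := by
        ext x
        simp only [Finset.mem_inter, Finset.mem_insert, Finset.mem_singleton]
        constructor
        · rintro ⟨rfl | rfl | rfl, hx⟩ <;> first | rfl | exact absurd hx (by assumption)
        · rintro rfl; exact ⟨Or.inr (Or.inl rfl), hb⟩
      simp [this]
    · have : ({z, b, c} : Finset α) ∩ C = {c} := by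
        ext x
        simp only [Finset.mem_inter, Finset.mem_insert, Finset.mem_singleton]
        constructor
        · rintro ⟨rfl | rfl | rfl, hx⟩ <;> first | rfl | exact absurd hx (by assumption)
        · rintro rfl; exact ⟨Or.inr (Or.inr rfl), hc⟩
      simp [this]

/-- Two proper boxes `B`, `C` in a `d`-box `X` are dichotomous
(some `Bᵢ = Xᵢ \ Cᵢ`) iff their hats are disjoint. -/
theorem stmt_2 {d : ℕ} (X : Fin d → Type*) [∀ i, Fintype (X i)] [∀ i, DecidableEq (X i)]
    (hX : ∀ i, 2 ≤ Fintype.card (X i))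
    (B C : ∀ i, Finset (X i))
    (hB : ∀ i, (B i).Nonempty ∧ B i ≠ Finset.univ)
    (hC : ∀ i, (C i).Nonempty ∧ C i ≠ Finset.univ) :
    (∃ i, B i = (C i)ᶜ) ↔
      ∀ A : ∀ i, Finset (X i),
        ¬ ((∀ i, Odd (A i).card ∧ Odd (A i ∩ B i).card) ∧
           (∀ i, Odd (A i).card ∧ Odd (A i ∩ C i).card)) := by
  constructor
  · rintro ⟨i, hi⟩ A ⟨h1, h2⟩
    obtain ⟨hA, hAB⟩ := h1 i
    obtain ⟨-, hAC⟩ := h2 i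
    have key : (A i ∩ B i).card + (A i ∩ C i).card = (A i).card := by
      rw [hi]
      have : A i ∩ (C i)ᶜ = A i \ C i := by
        ext x; simp [Finset.mem_sdiff]
      rw [this, Finset.card_sdiff_add_card_inter]
    have : Even ((A i).card) := by
      rw [← key]; exact hAB.add_odd hAC
    exact (Nat.not_even_iff_odd.2 hA) this
  · intro h
    by_contra hne
    push_neg at hne
    have hex : ∀ i, ∃ A : Finset (X i),
        Odd A.card ∧ Odd (A ∩ B i).card ∧ Odd (A ∩ C i).card := fun i =>
      aux_odd (B i) (C i) (hB i).1 (hC i).1 (hne i)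
    choose A hA using hex
    exact h A ⟨fun i => ⟨(hA i).1, (hA i).2.1⟩, fun i => ⟨(hA i).1, (hA i).2.2⟩⟩
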